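/- Let h > 0, let λ₁ ∈ ℂ \ {0}, let U_n(t), R_n(t), Q_n(t) be complex-valued functions, and let (f_n, g_n) be a solution of the associated Lax pair at λ = λ₁. Let Ω_n(t) be a complex-valued function, differentiable in t, satisfying Ω_{n+1} = −S_n Ω_n and Ω_n' = (i/2)(conj(λ₁)² − conj(λ₁)⁻² + |Q_n|² − |R_n|²) Ω_n for all n and t, where S_n := (1 + (i/2)h|U_n|²)/(1 − (i/2)h|U_n|²). Then the pair ((−1)^n Ω_n conj(g_n), (−1)^n Ω_n conj(f_n)) is a solution of the Lax pair at λ = −conj(λ₁). -/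

import Mathlib

open Complex ComplexConjugate

noncomputable section

/-- The factor `S = (1 + (i/2) h |u|^2)/(1 - (i/2) h |u|^2)`. -/
def mtmS (h : ℝ) (u : ℂ) : ℂ :=
  (1 + Complex.I / 2 * h * Complex.normSq u) / (1 - Complex.I / 2 * h * Complex.normSq u)

/-- `(U, R, Q)` solves the semi-discrete massive Thirring model with lattice spacing `h`. -/
def IsMTMSolution (h : ℝ) (U R Q : ℤ → ℝ → ℂ) : Prop :=
  (∀ (n : ℤ) (t : ℝ), DifferentiableAt ℝ (U n) t) ∧
  (∀ (n : ℤ) (t : ℝ),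
    4 * Complex.I * deriv (U n) t + Q (n + 1) t + Q n t
      + 2 * Complex.I / h * (R (n + 1) t - R n t)
      + (U n t) ^ 2 * (conj (R n t) + conj (R (n + 1) t))
      - U n t * ((Complex.normSq (Q (n + 1) t) : ℂ) + (Complex.normSq (Q n t) : ℂ)
          + (Complex.normSq (R (n + 1) t) : ℂ) + (Complex.normSq (R n t) : ℂ))
      - Complex.I * h / 2 * (U n t) ^ 2 * (conj (Q (n + 1) t) - conj (Q n t)) = 0) ∧
  (∀ (n : ℤ) (t : ℝ),
    -(2 * Complex.I / h) * (Q (n + 1) t - Q n t) + 2 * U n t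
      - (Complex.normSq (U n t) : ℂ) * (Q (n + 1) t + Q n t) = 0) ∧
  (∀ (n : ℤ) (t : ℝ),
    R (n + 1) t + R n t - 2 * U n t
      + Complex.I * h / 2 * (Complex.normSq (U n t) : ℂ) * (R (n + 1) t - R n t) = 0)

/-- `(f, g)` solves the Lax pair of the semi-discrete massive Thirring model with
potentials `(U, R, Q)`, lattice spacing `h`, at spectral value `lam`. -/
def IsLaxSolution (h : ℝ) (U R Q : ℤ → ℝ → ℂ) (lam : ℂ) (f g : ℤ → ℝ → ℂ) : Prop :=
  (∀ (n : ℤ) (t : ℝ), DifferentiableAt ℝ (f n) t) ∧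
  (∀ (n : ℤ) (t : ℝ), DifferentiableAt ℝ (g n) t) ∧
  (∀ (n : ℤ) (t : ℝ),
    f (n + 1) t = (lam + 2 * Complex.I / (h * lam) * mtmS h (U n t)) * f n t
      + 2 * U n t / (1 - Complex.I / 2 * h * Complex.normSq (U n t)) * g n t) ∧
  (∀ (n : ℤ) (t : ℝ),
    g (n + 1) t = 2 * conj (U n t) / (1 - Complex.I / 2 * h * Complex.normSq (U n t)) * f n t
      + (2 * Complex.I / (h * lam) - lam * mtmS h (U n t)) * g n t) ∧
  (∀ (n : ℤ) (t : ℝ),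
    deriv (f n) t = Complex.I / 2 * ((lam ^ 2 - (Complex.normSq (R n t) : ℂ)) * f n t
      + (lam * R n t - lam⁻¹ * Q n t) * g n t)) ∧
  (∀ (n : ℤ) (t : ℝ),
    deriv (g n) t = Complex.I / 2 * ((lam * conj (R n t) - lam⁻¹ * conj (Q n t)) * f n t
      + ((Complex.normSq (Q n t) : ℂ) - (lam ^ 2)⁻¹) * g n t))

set_option maxHeartbeats 1000000 in
/-- Symmetry of the Lax pair: from a solution at `lam1` one obtains a solution at `-conj lam1`. -/
theorem lax_symmetry_neg_conj
    (h : ℝ) (hh : 0 < h) (lam1 : ℂ) (hlam1 : lam1 ≠ 0)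
    (U R Q : ℤ → ℝ → ℂ) (f g : ℤ → ℝ → ℂ)
    (hLax : IsLaxSolution h U R Q lam1 f g)
    (Ω : ℤ → ℝ → ℂ)
    (hΩdiff : ∀ (n : ℤ) (t : ℝ), DifferentiableAt ℝ (Ω n) t)
    (hΩrec : ∀ (n : ℤ) (t : ℝ), Ω (n + 1) t = -(mtmS h (U n t)) * Ω n t)
    (hΩode : ∀ (n : ℤ) (t : ℝ),
      deriv (Ω n) t = Complex.I / 2 * ((conj lam1) ^ 2 - ((conj lam1) ^ 2)⁻¹
        + (Complex.normSq (Q n t) : ℂ) - (Complex.normSq (R n t) : ℂ)) * Ω n t) :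
    IsLaxSolution h U R Q (-(conj lam1))
      (fun n t => (-1 : ℂ) ^ n * Ω n t * conj (g n t))
      (fun n t => (-1 : ℂ) ^ n * Ω n t * conj (f n t)) := by
  obtain ⟨hfd, hgd, hfrec, hgrec, hfode, hgode⟩ := hLax
  have hh' : (h : ℂ) ≠ 0 := by exact_mod_cast hh.ne'
  have hc : conj lam1 ≠ 0 := by simpa using hlam1
  have hd1 : ∀ (u : ℂ), (1 - Complex.I/2*h*(Complex.normSq u : ℂ)) ≠ 0 := by
    intro u he
    have := congrArg Complex.re he
    simp at this
  have hd2 : ∀ (u : ℂ), (1 + Complex.I/2*h*(Complex.normSq u : ℂ)) ≠ 0 := by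
    intro u he
    have := congrArg Complex.re he
    simp at this
  refine ⟨?_, ?_, ?_, ?_, ?_, ?_⟩
  · intro n t
    simp only [starRingEnd_apply]
    exact ((hΩdiff n t).const_mul _).mul (hgd n t).star
  · intro n t
    simp only [starRingEnd_apply]
    exact ((hΩdiff n t).const_mul _).mul (hfd n t).star
  · intro n t
    simp only
    have hS : mtmS h (U n t) = (1 + Complex.I/2*h*(Complex.normSq (U n t) : ℂ))
        / (1 - Complex.I/2*h*(Complex.normSq (U n t) : ℂ)) := rfl
    rw [hΩrec, hgrec, zpow_add_one₀ (by norm_num : (-1:ℂ) ≠ 0)]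
    set d := (1 - Complex.I/2*(h:ℂ)*(Complex.normSq (U n t) : ℂ)) with hdd
    set e := (1 + Complex.I/2*(h:ℂ)*(Complex.normSq (U n t) : ℂ)) with hee
    have hd : d ≠ 0 := hd1 (U n t)
    have he : e ≠ 0 := hd2 (U n t)
    have hcd : conj d = e := by
      rw [hdd, hee]; simp [map_div₀, Complex.conj_ofReal, map_ofNat]; ring
    have hce : conj e = d := by
      rw [hdd, hee]; simp [map_div₀, Complex.conj_ofReal, map_ofNat]; ring
    clear_value d e
    rw [hS]
    simp only [map_add, map_mul, map_div₀, map_sub, map_one, map_ofNat, Complex.conj_I,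
      Complex.conj_conj, Complex.conj_ofReal, hcd, hce]
    field_simp [hd, he, hh', hlam1, hc]
    ring
  · intro n t
    simp only
    have hS : mtmS h (U n t) = (1 + Complex.I/2*h*(Complex.normSq (U n t) : ℂ))
        / (1 - Complex.I/2*h*(Complex.normSq (U n t) : ℂ)) := rfl
    rw [hΩrec, hfrec, zpow_add_one₀ (by norm_num : (-1:ℂ) ≠ 0)]
    set d := (1 - Complex.I/2*(h:ℂ)*(Complex.normSq (U n t) : ℂ)) with hdd
    set e := (1 + Complex.I/2*(h:ℂ)*(Complex.normSq (U n t) : ℂ)) with hee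
    have hd : d ≠ 0 := hd1 (U n t)
    have he : e ≠ 0 := hd2 (U n t)
    have hcd : conj d = e := by
      rw [hdd, hee]; simp [map_div₀, Complex.conj_ofReal, map_ofNat]; ring
    have hce : conj e = d := by
      rw [hdd, hee]; simp [map_div₀, Complex.conj_ofReal, map_ofNat]; ring
    clear_value d e
    rw [hS]
    simp only [map_add, map_mul, map_div₀, map_sub, map_one, map_ofNat, Complex.conj_I,
      Complex.conj_conj, Complex.conj_ofReal, hcd, hce]
    field_simp [hd, he, hh', hlam1, hc]
    ring
  · intro n t
    have hD : HasDerivAt (fun t => (-1 : ℂ) ^ n * Ω n t * conj (g n t))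
        (((-1 : ℂ) ^ n * deriv (Ω n) t) * conj (g n t)
          + ((-1 : ℂ) ^ n * Ω n t) * conj (deriv (g n) t)) t := by
      simp only [starRingEnd_apply]
      exact (((hΩdiff n t).hasDerivAt.const_mul _).mul (hgd n t).hasDerivAt.star)
    rw [hD.deriv, hΩode, hgode]
    simp only [map_add, map_mul, map_div₀, map_sub, map_one, Complex.conj_I,
      Complex.conj_ofReal, map_ofNat, map_pow, Complex.conj_conj, map_inv₀]
    field_simp [hlam1, hc]
    ring
  · intro n t
    have hD : HasDerivAt (fun t => (-1 : ℂ) ^ n * Ω n t * conj (f n t))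
        (((-1 : ℂ) ^ n * deriv (Ω n) t) * conj (f n t)
          + ((-1 : ℂ) ^ n * Ω n t) * conj (deriv (f n) t)) t := by
      simp only [starRingEnd_apply]
      exact (((hΩdiff n t).hasDerivAt.const_mul _).mul (hfd n t).hasDerivAt.star)
    rw [hD.deriv, hΩode, hfode]
    simp only [map_add, map_mul, map_div₀, map_sub, map_one, Complex.conj_I,
      Complex.conj_ofReal, map_ofNat, map_pow, Complex.conj_conj, map_inv₀]
    field_simp [hlam1, hc]
    ring
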